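/- Entrywise perturbation bound for the single-qubit μ-biased QFT: for c ∈ (0,1], μ, μ̃ ∈ [-1+c,1-c] with |μ−μ̃| ≤ ε, every x ∈ {-1,1} and a ∈ {0,1} satisfy |√(D_μ(x))φ_{μ,a}(x) − √(D_{μ̃}(x))φ_{μ̃,a}(x)| ≤ tε where t = ((2−c)(1/√(8c) + 1/(2c)) + 1)/c². -/

import Mathlib

lemma entry_true (μ x : ℝ) (h1 : 0 < 1 + μ) (h2 : 0 < 1 - μ) (hx : x = 1 ∨ x = -1) :
    Real.sqrt ((1 + μ * x) / 2) * ((x - μ) / Real.sqrt (1 - μ ^ 2)) =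
      x * Real.sqrt ((1 - μ * x) / 2) := by
  have e1 : Real.sqrt (1 - μ ^ 2) = Real.sqrt (1 - μ) * Real.sqrt (1 + μ) := by
    rw [← Real.sqrt_mul (by linarith)]; ring_nf
  have s2 : (0:ℝ) < Real.sqrt 2 := by positivity
  have sp : 0 < Real.sqrt (1 + μ) := Real.sqrt_pos.2 h1
  have sm : 0 < Real.sqrt (1 - μ) := Real.sqrt_pos.2 h2
  have hp : Real.sqrt (1 + μ) ^ 2 = 1 + μ := Real.sq_sqrt (by linarith)
  have hm : Real.sqrt (1 - μ) ^ 2 = 1 - μ := Real.sq_sqrt (by linarith)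
  rcases hx with h | h <;> subst h
  · rw [show (1 + μ * 1)/2 = (1+μ)/2 by ring, show (1 - μ * 1)/2 = (1-μ)/2 by ring,
      Real.sqrt_div (by linarith) 2, Real.sqrt_div (by linarith) 2, e1]
    field_simp
    linear_combination (-1 : ℝ) * hm
  · rw [show (1 + μ * (-1))/2 = (1-μ)/2 by ring, show (1 - μ * (-1))/2 = (1+μ)/2 by ring,
      Real.sqrt_div (by linarith) 2, Real.sqrt_div (by linarith) 2, e1]
    field_simp
    linear_combination hp

lemma sqrt_diff_bound (c s t : ℝ) (hc : 0 < c) (hs : c ≤ s) (ht : c ≤ t) :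
    |Real.sqrt (s / 2) - Real.sqrt (t / 2)| ≤ |s - t| / Real.sqrt (8 * c) := by
  set u := Real.sqrt (s / 2) with hu
  set v := Real.sqrt (t / 2) with hv
  have hu2 : u ^ 2 = s / 2 := Real.sq_sqrt (by linarith)
  have hv2 : v ^ 2 = t / 2 := Real.sq_sqrt (by linarith)
  have hS : Real.sqrt (8 * c) = 4 * Real.sqrt (c / 2) := by
    rw [show (8:ℝ) * c = 4 ^ 2 * (c / 2) by ring, Real.sqrt_mul (by positivity),
      Real.sqrt_sq (by norm_num)]
  have hcu : Real.sqrt (c / 2) ≤ u := Real.sqrt_le_sqrt (by linarith)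
  have hcv : Real.sqrt (c / 2) ≤ v := Real.sqrt_le_sqrt (by linarith)
  have hSpos : 0 < Real.sqrt (8 * c) := Real.sqrt_pos.2 (by linarith)
  rw [le_div_iff₀ hSpos]
  have huv : 0 ≤ 2 * (u + v) := by positivity
  have h1 : Real.sqrt (8 * c) ≤ 2 * (u + v) := by rw [hS]; linarith
  have h2 : |u - v| * (2 * (u + v)) = |s - t| := by
    rw [show |u - v| * (2 * (u + v)) = |(u - v) * (2 * (u + v))| by
      rw [abs_mul, abs_of_nonneg huv]]
    congr 1
    nlinarith [hu2, hv2]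
  calc |u - v| * Real.sqrt (8 * c) ≤ |u - v| * (2 * (u + v)) :=
        mul_le_mul_of_nonneg_left h1 (abs_nonneg _)
    _ = |s - t| := h2

lemma final_bound (c ε : ℝ) (hc : 0 < c) (hc1 : c ≤ 1) (hε₀ : 0 ≤ ε) :
    ε / Real.sqrt (8 * c) ≤
      ((2 - c) * (1 / Real.sqrt (8 * c) + 1 / (2 * c)) + 1) / c ^ 2 * ε := by
  have hS : 0 < Real.sqrt (8 * c) := Real.sqrt_pos.2 (by linarith)
  have h2c : (1:ℝ) ≤ (2 - c) / c ^ 2 := by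
    rw [le_div_iff₀ (by positivity)]; nlinarith
  have hA : 0 ≤ ((2 - c) * (1 / (2 * c)) + 1) / c ^ 2 :=
    div_nonneg (add_nonneg (mul_nonneg (by linarith) (by positivity)) (by norm_num))
      (by positivity)
  have heq : ((2 - c) * (1 / Real.sqrt (8 * c) + 1 / (2 * c)) + 1) / c ^ 2 =
      (2 - c) / c ^ 2 * (1 / Real.sqrt (8 * c)) + ((2 - c) * (1 / (2 * c)) + 1) / c ^ 2 := by
    ring
  have h1 : 1 / Real.sqrt (8 * c) ≤
      ((2 - c) * (1 / Real.sqrt (8 * c) + 1 / (2 * c)) + 1) / c ^ 2 := by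
    rw [heq]
    have := mul_le_mul_of_nonneg_right h2c (le_of_lt (one_div_pos.2 hS))
    linarith
  calc ε / Real.sqrt (8 * c) = 1 / Real.sqrt (8 * c) * ε := by ring
    _ ≤ _ := mul_le_mul_of_nonneg_right h1 hε₀

/-- Entrywise perturbation bound for the single-qubit μ-biased QFT: for
`c ∈ (0,1]`, `μ, μ̃ ∈ [-1+c, 1-c]` with `|μ − μ̃| ≤ ε`, every `x ∈ {-1,1}` and
`a ∈ {0,1}` satisfy `|√(D_μ(x))φ_{μ,a}(x) − √(D_μ̃(x))φ_{μ̃,a}(x)| ≤ tε`, where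
`t = ((2−c)(1/√(8c) + 1/(2c)) + 1)/c²`. -/
theorem single_qubit_QFT_entry_perturbation (c μ μt ε : ℝ) (hc : 0 < c) (hc1 : c ≤ 1)
    (hμ : |μ| ≤ 1 - c) (hμt : |μt| ≤ 1 - c) (hε₀ : 0 ≤ ε) (hε : |μ - μt| ≤ ε)
    (x : ℝ) (hx : x = 1 ∨ x = -1) (a : Bool) :
    |Real.sqrt ((1 + μ * x) / 2) * (if a then (x - μ) / Real.sqrt (1 - μ ^ 2) else 1) -
        Real.sqrt ((1 + μt * x) / 2) *
          (if a then (x - μt) / Real.sqrt (1 - μt ^ 2) else 1)| ≤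
      ((2 - c) * (1 / Real.sqrt (8 * c) + 1 / (2 * c)) + 1) / c ^ 2 * ε := by
  have hμ' := abs_le.1 hμ
  have hμt' := abs_le.1 hμt
  have hS : 0 < Real.sqrt (8 * c) := Real.sqrt_pos.2 (by linarith)
  have hx1 : |x| = 1 := by rcases hx with h | h <;> simp [h]
  have hsp : c ≤ 1 + μ * x := by rcases hx with h | h <;> subst h <;> nlinarith [hμ'.1, hμ'.2]
  have htp : c ≤ 1 + μt * x := by rcases hx with h | h <;> subst h <;> nlinarith [hμt'.1, hμt'.2]
  have hsm : c ≤ 1 - μ * x := by rcases hx with h | h <;> subst h <;> nlinarith [hμ'.1, hμ'.2]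
  have htm : c ≤ 1 - μt * x := by rcases hx with h | h <;> subst h <;> nlinarith [hμt'.1, hμt'.2]
  cases a
  · simp only [Bool.false_eq_true, if_false, mul_one]
    calc |Real.sqrt ((1 + μ * x) / 2) - Real.sqrt ((1 + μt * x) / 2)|
        ≤ |(1 + μ * x) - (1 + μt * x)| / Real.sqrt (8 * c) :=
          sqrt_diff_bound c _ _ hc hsp htp
      _ ≤ ε / Real.sqrt (8 * c) := by
          gcongr
          rw [show (1 + μ * x) - (1 + μt * x) = (μ - μt) * x by ring, abs_mul, hx1, mul_one]
          exact hε
      _ ≤ _ := final_bound c ε hc hc1 hε₀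
  · simp only [if_true]
    rw [entry_true μ x (by linarith [hμ'.1]) (by linarith [hμ'.2]) hx,
      entry_true μt x (by linarith [hμt'.1]) (by linarith [hμt'.2]) hx,
      ← mul_sub, abs_mul, hx1, one_mul]
    calc |Real.sqrt ((1 - μ * x) / 2) - Real.sqrt ((1 - μt * x) / 2)|
        ≤ |(1 - μ * x) - (1 - μt * x)| / Real.sqrt (8 * c) :=
          sqrt_diff_bound c _ _ hc hsm htm
      _ ≤ ε / Real.sqrt (8 * c) := by
          gcongr
          rw [show (1 - μ * x) - (1 - μt * x) = (μt - μ) * x by ring, abs_mul, hx1, mul_one,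
            abs_sub_comm]
          exact hε
      _ ≤ _ := final_bound c ε hc hc1 hε₀
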